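/- Let a ≥ 1 and b ≥ 0 be integers with d = a + b, and let n ≥ d. Let X and Y be n × d real matrices of full column rank d with X I_{a,b} Xᵀ = Y I_{a,b} Yᵀ. Then the matrix Q = I_{a,b} Yᵀ X (Xᵀ X)⁻¹ I_{a,b} satisfies X = Y Q and Qᵀ I_{a,b} Q = I_{a,b}. -/
import Mathlib


open Matrix

/-- `I_{a,b}`: the `(a+b) × (a+b)` diagonal matrix whose first `a` diagonal entries
equal `1` and whose last `b` diagonal entries equal `-1`. -/
def Iab (a b : ℕ) : Matrix (Fin (a + b)) (Fin (a + b)) ℝ :=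
  Matrix.diagonal (fun i => if (i : ℕ) < a then (1 : ℝ) else -1)

lemma Iab_mul_self (a b : ℕ) : Iab a b * Iab a b = 1 := by
  rw [Iab, Matrix.diagonal_mul_diagonal]
  convert Matrix.diagonal_one with i
  by_cases h : (i : ℕ) < a <;> simp [h]

lemma Iab_transpose (a b : ℕ) : (Iab a b)ᵀ = Iab a b := by
  simp [Iab, Matrix.diagonal_transpose]

lemma XtX_isUnit {n d : ℕ} (X : Matrix (Fin n) (Fin d) ℝ) (hX : X.rank = d) :
    IsUnit (Xᵀ * X) := by
  have h1 : (Xᵀ * X).rank = d := by rw [Matrix.rank_transpose_mul_self]; exact hX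
  rw [← Matrix.mulVec_surjective_iff_isUnit]
  have htop : LinearMap.range (Xᵀ * X).mulVecLin = ⊤ := by
    apply Submodule.eq_top_of_finrank_eq
    rw [← Matrix.rank, h1]
    simp
  have hs := LinearMap.range_eq_top.mp htop
  intro y
  obtain ⟨x, hx⟩ := hs y
  exact ⟨x, hx⟩

/-- If `X, Y` are full column rank `n × (a+b)` real matrices with
`X I_{a,b} Xᵀ = Y I_{a,b} Yᵀ`, then `Q = I_{a,b} Yᵀ X (Xᵀ X)⁻¹ I_{a,b}` satisfies
`X = Y Q` and `Qᵀ I_{a,b} Q = I_{a,b}`. -/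
theorem stmt1 (a b n : ℕ) (ha : 1 ≤ a) (hn : a + b ≤ n)
    (X Y : Matrix (Fin n) (Fin (a + b)) ℝ)
    (hX : X.rank = a + b) (hY : Y.rank = a + b)
    (hXY : X * Iab a b * Xᵀ = Y * Iab a b * Yᵀ)
    (Q : Matrix (Fin (a + b)) (Fin (a + b)) ℝ)
    (hQ : Q = Iab a b * Yᵀ * X * (Xᵀ * X)⁻¹ * Iab a b) :
    X = Y * Q ∧ Qᵀ * Iab a b * Q = Iab a b := by
  set J := Iab a b with hJdef
  have hJ2 : J * J = 1 := Iab_mul_self a b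
  have hJT : Jᵀ = J := Iab_transpose a b
  have hU : IsUnit (Xᵀ * X) := XtX_isUnit X hX
  have hdet : IsUnit (Xᵀ * X).det := (Matrix.isUnit_iff_isUnit_det _).mp hU
  have hInv : (Xᵀ * X) * (Xᵀ * X)⁻¹ = 1 := Matrix.mul_nonsing_inv _ hdet
  have hInv' : (Xᵀ * X)⁻¹ * (Xᵀ * X) = 1 := Matrix.nonsing_inv_mul _ hdet
  have hSymm : ((Xᵀ * X)⁻¹)ᵀ = (Xᵀ * X)⁻¹ := by
    rw [Matrix.transpose_nonsing_inv, Matrix.transpose_mul, Matrix.transpose_transpose]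
  -- ∀-quantified rewrite lemmas to handle associativity of non-square products
  have key1 : ∀ (Z : Matrix (Fin n) (Fin (a + b)) ℝ),
      Y * (J * (Yᵀ * Z)) = X * (J * (Xᵀ * Z)) := by
    intro Z
    calc Y * (J * (Yᵀ * Z)) = (Y * J * Yᵀ) * Z := by simp only [Matrix.mul_assoc]
    _ = (X * J * Xᵀ) * Z := by rw [← hXY]
    _ = X * (J * (Xᵀ * Z)) := by simp only [Matrix.mul_assoc]
  have key2 : ∀ (Z : Matrix (Fin (a + b)) (Fin (a + b)) ℝ),
      Xᵀ * (X * ((Xᵀ * X)⁻¹ * Z)) = Z := by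
    intro Z
    calc Xᵀ * (X * ((Xᵀ * X)⁻¹ * Z)) = ((Xᵀ * X) * (Xᵀ * X)⁻¹) * Z := by
          simp only [Matrix.mul_assoc]
    _ = Z := by rw [hInv, Matrix.one_mul]
  have key3 : ∀ (Z : Matrix (Fin (a + b)) (Fin (a + b)) ℝ), J * (J * Z) = Z := by
    intro Z
    rw [← Matrix.mul_assoc, hJ2, Matrix.one_mul]
  have hInvR : (Xᵀ * X)⁻¹ * (Xᵀ * X) = 1 := hInv'
  have part1 : X = Y * Q := by
    rw [hQ]
    simp only [Matrix.mul_assoc, key1, key2, hJ2, Matrix.mul_one]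
  refine ⟨part1, ?_⟩
  have hQT : Qᵀ = J * ((Xᵀ * X)⁻¹ * (Xᵀ * (Y * J))) := by
    rw [hQ]
    simp only [Matrix.transpose_mul, Matrix.transpose_transpose, hJT, hSymm, Matrix.mul_assoc]
  rw [hQT, hQ]
  calc J * ((Xᵀ * X)⁻¹ * (Xᵀ * (Y * J))) * J * (J * Yᵀ * X * (Xᵀ * X)⁻¹ * J)
      = J * ((Xᵀ * X)⁻¹ * (Xᵀ * (Y * (J * (J * (J * (Yᵀ * (X * ((Xᵀ * X)⁻¹ * J))))))))) := by
        simp only [Matrix.mul_assoc]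
    _ = J * ((Xᵀ * X)⁻¹ * (Xᵀ * (Y * (J * (Yᵀ * (X * ((Xᵀ * X)⁻¹ * J))))))) := by
        rw [key3]
    _ = J * ((Xᵀ * X)⁻¹ * (Xᵀ * (X * (J * (Xᵀ * (X * ((Xᵀ * X)⁻¹ * J))))))) := by
        rw [key1]
    _ = J * ((Xᵀ * X)⁻¹ * (Xᵀ * (X * (J * J)))) := by rw [key2]
    _ = J * ((Xᵀ * X)⁻¹ * (Xᵀ * X)) := by rw [hJ2, Matrix.mul_one]
    _ = J := by rw [hInvR, Matrix.mul_one]
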